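/- arXiv:2403.00916 — 10 statements merged into one kernel-verified Lean document; each statement's English description precedes it below -/
import Mathlib

section
/- For every natural number d ≥ 2, the Minkowski causal order on M_d := ℝ × EuclideanSpace ℝ (Fin d) is a conical poset: for all nonempty finite subsets L₁, L₂ ⊆ M_d, if f(L₁) = f(L₂) then span(L₁) = span(L₂). -/
/-- `d+1`-dimensional Minkowski space-time `M_d := ℝ × EuclideanSpace ℝ (Fin d)`,
as a pair of a time coordinate and a space coordinate. -/
structure Mink (d : ℕ) where
  t : ℝ
  x : EuclideanSpace ℝ (Fin d)

/-- The Minkowski causal order: `(t,x) ⪯ (s,y)` iff `‖y − x‖ ≤ s − t`. -/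
instance (d : ℕ) : PartialOrder (Mink d) where
  le p q := ‖q.x - p.x‖ ≤ q.t - p.t
  le_refl p := by simp
  le_trans p q r hpq hqr := by
    have hpq' : ‖q.x - p.x‖ ≤ q.t - p.t := hpq
    have hqr' : ‖r.x - q.x‖ ≤ r.t - q.t := hqr
    have htri : ‖r.x - p.x‖ ≤ ‖r.x - q.x‖ + ‖q.x - p.x‖ :=
      norm_sub_le_norm_sub_add_norm_sub _ _ _
    show ‖r.x - p.x‖ ≤ r.t - p.t
    linarith
  le_antisymm p q hpq hqp := by
    have hpq' : ‖q.x - p.x‖ ≤ q.t - p.t := hpq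
    have hqp' : ‖p.x - q.x‖ ≤ p.t - q.t := hqp
    have hrev : ‖p.x - q.x‖ = ‖q.x - p.x‖ := norm_sub_rev _ _
    have hnn : (0:ℝ) ≤ ‖q.x - p.x‖ := norm_nonneg _
    have hx0 : ‖q.x - p.x‖ = 0 := by linarith
    have hx : q.x = p.x := sub_eq_zero.mp (norm_eq_zero.mp hx0)
    have ht : p.t = q.t := by linarith
    cases p; cases q; simp_all

/-- The causal future `J⁺(p) = {q : p ≤ q}` of a point in a partially ordered set. -/
def Jplus {T : Type*} [PartialOrder T] (p : T) : Set T := {q : T | p ≤ q}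

/-- The joint future `f(L) = ⋂_{p ∈ L} J⁺(p)` of a subset of a poset (with `f(∅) = T`). -/
def jointFuture {T : Type*} [PartialOrder T] (L : Set T) : Set T := ⋂ p ∈ L, Jplus p

/-- The spanning set `span(L)`: the union of all subsets `L' ⊆ L` with
`f(L') = f(L)` such that no strict subset `L'' ⊊ L'` satisfies `f(L'') = f(L)`. -/
def spanS {T : Type*} [PartialOrder T] (L : Set T) : Set T :=
  {x : T | ∃ L' : Set T, L' ⊆ L ∧ x ∈ L' ∧ jointFuture L' = jointFuture L ∧
    ∀ L'' : Set T, L'' ⊂ L' → jointFuture L'' ≠ jointFuture L}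

/-- A poset is conical if for all nonempty finite subsets `L₁, L₂`,
`f(L₁) = f(L₂)` implies `span(L₁) = span(L₂)`. -/
def Conical (T : Type*) [PartialOrder T] : Prop :=
  ∀ L₁ L₂ : Set T, L₁.Finite → L₂.Finite → L₁.Nonempty → L₂.Nonempty →
    jointFuture L₁ = jointFuture L₂ → spanS L₁ = spanS L₂


/-! ### Auxiliary material for the proof -/

open Set Metric RealInnerProductSpace

section Aux

/-- If an open ball in a Baire metric space is covered by countably many closed sets,
one of them has nonempty interior. -/
lemma ball_cover_aux {X : Type*} [MetricSpace X] [BaireSpace X]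
    {ι : Type*} {S : Set ι} (hS : S.Countable) {Z : ι → Set X} (hZ : ∀ i ∈ S, IsClosed (Z i))
    {x : X} {r : ℝ} (hr : 0 < r) (hcov : ball x r ⊆ ⋃ i ∈ S, Z i) :
    ∃ i ∈ S, (interior (Z i)).Nonempty := by
  rcases S.eq_empty_or_nonempty with rfl | hSne
  · simp only [mem_empty_iff_false, iUnion_of_empty, iUnion_empty] at hcov
    exact absurd (hcov (mem_ball_self hr)) (by simp)
  · set f : ι → Set X := fun i => Z i ∪ (ball x r)ᶜ with hf
    have hc : ∀ i ∈ S, IsClosed (f i) := fun i hi =>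
      (hZ i hi).union (isClosed_compl_iff.mpr isOpen_ball)
    have hU : ⋃ i ∈ S, f i = univ := by
      apply eq_univ_of_forall
      intro y
      by_cases hy : y ∈ ball x r
      · rcases mem_iUnion₂.mp (hcov hy) with ⟨i, hi, hyi⟩
        exact mem_iUnion₂.mpr ⟨i, hi, Or.inl hyi⟩
      · rcases hSne with ⟨i, hi⟩
        exact mem_iUnion₂.mpr ⟨i, hi, Or.inr hy⟩
    have hdense := dense_biUnion_interior_of_closed hc hS hU
    rcases hdense.exists_mem_open isOpen_ball ⟨x, mem_ball_self hr⟩ with ⟨y, hy1, hy2⟩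
    rcases mem_iUnion₂.mp hy1 with ⟨i, hi, hyi⟩
    refine ⟨i, hi, ?_⟩
    have hsub : (interior (f i)) ∩ ball x r ⊆ Z i := by
      rintro u ⟨hu1, hu2⟩
      rcases (interior_subset hu1 : u ∈ f i) with h | h
      · exact h
      · exact absurd hu2 h
    have hyint : y ∈ interior (interior (f i) ∩ ball x r) := by
      rw [interior_inter, interior_interior, isOpen_ball.interior_eq]
      exact ⟨hyi, hy2⟩
    exact ⟨y, interior_mono hsub hyint⟩

/-- A unit vector orthogonal to a given vector exists when `2 ≤ d`. -/
lemma exists_unit_orthogonal {d : ℕ} (hd : 2 ≤ d) (a : EuclideanSpace ℝ (Fin d)) :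
    ∃ v : EuclideanSpace ℝ (Fin d), ‖v‖ = 1 ∧ ⟪a, v⟫ = 0 := by
  have hfr : Module.finrank ℝ (EuclideanSpace ℝ (Fin d)) = d := finrank_euclideanSpace_fin
  have hne : (ℝ ∙ a)ᗮ ≠ ⊥ := by
    intro hbot
    have htop : (ℝ ∙ a) = ⊤ := Submodule.orthogonal_eq_bot_iff.mp hbot
    by_cases ha : a = 0
    · rw [ha] at htop
      simp [Submodule.span_zero_singleton] at htop
      have : Module.finrank ℝ (⊥ : Submodule ℝ (EuclideanSpace ℝ (Fin d))) =
          Module.finrank ℝ (⊤ : Submodule ℝ (EuclideanSpace ℝ (Fin d))) := by rw [htop]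
      rw [finrank_bot, finrank_top, hfr] at this
      omega
    · have h1 : Module.finrank ℝ (ℝ ∙ a) = 1 := finrank_span_singleton ha
      rw [htop, finrank_top, hfr] at h1
      omega
  rcases Submodule.ne_bot_iff _ |>.mp hne with ⟨v₀, hv₀mem, hv₀ne⟩
  refine ⟨‖v₀‖⁻¹ • v₀, ?_, ?_⟩
  · simp [norm_smul, norm_ne_zero_iff.mpr hv₀ne, inv_mul_cancel₀]
  · have h0 : ⟪a, v₀⟫ = 0 :=
      Submodule.inner_right_of_mem_orthogonal (Submodule.mem_span_singleton_self a) hv₀mem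
    rw [real_inner_smul_right, h0, mul_zero]

/-- The set where `‖y - a‖ = ‖y‖ - c` has empty interior when `(a, c) ≠ (0, 0)` and `d ≥ 2`. -/
lemma cone_cap_empty_interior {d : ℕ} (hd : 2 ≤ d) {a : EuclideanSpace ℝ (Fin d)} {c : ℝ}
    (hac : ¬(a = 0 ∧ c = 0)) :
    ¬ (interior {y : EuclideanSpace ℝ (Fin d) | ‖y - a‖ = ‖y‖ - c}).Nonempty := by
  rintro ⟨w, hw⟩
  rcases Metric.mem_nhds_iff.mp (mem_interior_iff_mem_nhds.mp hw) with ⟨ε, hε, hball⟩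
  have hsq : ∀ y ∈ ball w ε, 2 * c * ‖y‖ = 2 * ⟪y, a⟫ - ‖a‖ ^ 2 + c ^ 2 := by
    intro y hy
    have h : ‖y - a‖ = ‖y‖ - c := hball hy
    have h2 : ‖y - a‖ ^ 2 = (‖y‖ - c) ^ 2 := by rw [h]
    rw [norm_sub_sq_real] at h2
    ring_nf at h2 ⊢
    nlinarith [h2]
  by_cases hc : c = 0
  · have ha : a ≠ 0 := fun h => hac ⟨h, hc⟩
    have hna : 0 < ‖a‖ := norm_pos_iff.mpr ha
    set y₂ := w + (ε / 2 / ‖a‖) • a with hy₂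
    have hy₂mem : y₂ ∈ ball w ε := by
      rw [mem_ball, dist_eq_norm]
      have : y₂ - w = (ε / 2 / ‖a‖) • a := by rw [hy₂]; abel
      rw [this, norm_smul]
      rw [Real.norm_eq_abs, abs_of_pos (by positivity)]
      rw [div_mul_cancel₀ _ (ne_of_gt hna)]
      linarith
    have h1 := hsq w (mem_ball_self hε)
    have h2 := hsq y₂ hy₂mem
    rw [hc] at h1 h2
    rw [hy₂, inner_add_left, real_inner_smul_left] at h2
    have hinaa : ⟪a, a⟫ = ‖a‖ ^ 2 := real_inner_self_eq_norm_sq a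
    have hk : 0 < ε / 2 / ‖a‖ := by positivity
    nlinarith [h1, h2, hinaa, mul_pos hk (pow_pos hna 2)]
  · obtain ⟨v, hv1, hv2⟩ := exists_unit_orthogonal hd a
    have key : ∀ s : ℝ, 0 ≤ s → s < ε → 2 * s * ⟪w, v⟫ + s ^ 2 = 0 := by
      intro s hs0 hsε
      have hmem : w + s • v ∈ ball w ε := by
        rw [mem_ball, dist_eq_norm]
        have : w + s • v - w = s • v := by abel
        rw [this, norm_smul, hv1, mul_one, Real.norm_eq_abs, abs_of_nonneg hs0]
        exact hsε
      have h1 := hsq w (mem_ball_self hε)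
      have h2 := hsq (w + s • v) hmem
      have hinner : ⟪w + s • v, a⟫ = ⟪w, a⟫ := by
        rw [inner_add_left, real_inner_smul_left, real_inner_comm a v, hv2, mul_zero, add_zero]
      rw [hinner] at h2
      have hnorm : ‖w + s • v‖ = ‖w‖ := by
        have h3 := h2.trans h1.symm
        have h4 : (2 * c) * ‖w + s • v‖ = (2 * c) * ‖w‖ := by linarith
        exact mul_left_cancel₀ (mul_ne_zero two_ne_zero hc) h4
      have hns : ‖w + s • v‖ ^ 2 = ‖w‖ ^ 2 + 2 * ⟪w, s • v⟫ + ‖s • v‖ ^ 2 :=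
        norm_add_sq_real w (s • v)
      rw [hnorm, real_inner_smul_right, norm_smul, hv1, mul_one, Real.norm_eq_abs] at hns
      have : s ^ 2 = |s| ^ 2 := (sq_abs s).symm
      nlinarith [hns]
    have k1 := key (ε / 2) (by positivity) (by linarith)
    have k2 := key (ε / 4) (by positivity) (by linarith)
    nlinarith [k1, k2]

lemma mem_jointFuture {T : Type*} [PartialOrder T] {L : Set T} {z : T} :
    z ∈ jointFuture L ↔ ∀ q ∈ L, q ≤ z := by
  simp [jointFuture, Jplus]

lemma jointFuture_anti {T : Type*} [PartialOrder T] {L M : Set T} (h : L ⊆ M) :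
    jointFuture M ⊆ jointFuture L := by
  intro z hz
  rw [mem_jointFuture] at hz ⊢
  exact fun q hq => hz q (h hq)

lemma Mink.le_iff {d : ℕ} (p q : Mink d) : p ≤ q ↔ ‖q.x - p.x‖ ≤ q.t - p.t := Iff.rfl

/-- Key lemma: in `M_d` with `d ≥ 2`, if `L` is a minimal set (no proper subset has the
same joint future) and `K` is a finite set with the same joint future, then `L ⊆ K`. -/
lemma mink_key {d : ℕ} (hd : 2 ≤ d) {L K : Set (Mink d)} (hK : K.Finite)
    (hmin : ∀ L'' : Set (Mink d), L'' ⊂ L → jointFuture L'' ≠ jointFuture L)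
    (hfK : jointFuture K = jointFuture L) : L ⊆ K := by
  intro p hp
  by_contra hpK
  have hssub : L \ {p} ⊂ L := Set.sdiff_singleton_ssubset.mpr hp
  have hne := hmin _ hssub
  have hmono : jointFuture L ⊆ jointFuture (L \ {p}) := jointFuture_anti Set.diff_subset
  obtain ⟨z, hz1, hz2⟩ : ∃ z, z ∈ jointFuture (L \ {p}) ∧ z ∉ jointFuture L := by
    rcases Set.exists_of_ssubset (hmono.ssubset_of_ne (Ne.symm hne)) with ⟨z, h1, h2⟩
    exact ⟨z, h1, h2⟩
  have hzq : ∀ q ∈ L, q ≠ p → ‖z.x - q.x‖ ≤ z.t - q.t := fun q hq hqp =>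
    (Mink.le_iff q z).mp (mem_jointFuture.mp hz1 q ⟨hq, hqp⟩)
  have hzp : ¬ (‖z.x - p.x‖ ≤ z.t - p.t) := by
    intro h
    refine hz2 (mem_jointFuture.mpr fun q hq => ?_)
    by_cases hqp : q = p
    · subst hqp; exact h
    · exact hzq q hq hqp
  push_neg at hzp
  set s : ℝ := ‖z.x - p.x‖ - (z.t - p.t) with hs
  have hspos : 0 < s := by simp only [hs]; linarith
  set ρ : ℝ := s / 2 with hρ
  have hρpos : 0 < ρ := by positivity
  set y₀ : EuclideanSpace ℝ (Fin d) := z.x - p.x with hy₀def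
  have hy₀ : ‖y₀‖ = z.t - p.t + s := by simp only [hy₀def, hs]; ring
  -- the ball around y₀ is covered by the cone-boundary pieces of points of K
  have hcov : ball y₀ ρ ⊆
      ⋃ k ∈ K, {y : EuclideanSpace ℝ (Fin d) | ‖y - (k.x - p.x)‖ = ‖y‖ - (k.t - p.t)} := by
    intro y hy
    rw [mem_ball, dist_eq_norm] at hy
    set w : Mink d := ⟨p.t + ‖y‖, p.x + y⟩ with hw
    have hwx : ∀ q : Mink d, w.x - q.x = (z.x - q.x) + (y - y₀) + (p.x - z.x + y₀) := by
      intro q; simp only [hw, hy₀def]; abel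
    have hynorm : ‖y₀‖ - ‖y‖ ≤ ‖y - y₀‖ := by
      calc ‖y₀‖ - ‖y‖ ≤ ‖y₀ - y‖ := norm_sub_norm_le y₀ y
        _ = ‖y - y₀‖ := norm_sub_rev y₀ y
    have hwL : w ∈ jointFuture L := by
      rw [mem_jointFuture]
      intro q hq
      rw [Mink.le_iff]
      by_cases hqp : q = p
      · subst hqp
        have : w.x - q.x = y := by simp only [hw]; abel
        rw [this]
        simp only [hw]
        linarith [le_refl ‖y‖]
      · have h1 := hzq q hq hqp
        have h2 : w.x - q.x = (z.x - q.x) + (y - y₀) := by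
          simp only [hw, hy₀def]; abel
        have h3 : ‖w.x - q.x‖ ≤ ‖z.x - q.x‖ + ‖y - y₀‖ := by
          rw [h2]; exact norm_add_le _ _
        have h4 : w.t - q.t = p.t + ‖y‖ - q.t := rfl
        rw [h4]
        linarith
    have hwK : w ∈ jointFuture K := by rw [hfK]; exact hwL
    by_contra hnone
    simp only [mem_iUnion₂, mem_setOf_eq, not_exists] at hnone
    have hstrict : ∀ k ∈ K, ‖w.x - k.x‖ < w.t - k.t := by
      intro k hk
      have hle : ‖w.x - k.x‖ ≤ w.t - k.t := (Mink.le_iff k w).mp (mem_jointFuture.mp hwK k hk)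
      rcases lt_or_eq_of_le hle with h | h
      · exact h
      · exfalso
        apply hnone k hk
        have e1 : w.x - k.x = y - (k.x - p.x) := by simp only [hw]; abel
        have e2 : w.t - k.t = ‖y‖ - (k.t - p.t) := by simp only [hw]; ring
        rw [e1, e2] at h
        exact h
    obtain ⟨δ, hδpos, hδ⟩ : ∃ δ > 0, ∀ k ∈ K, ‖w.x - k.x‖ ≤ w.t - k.t - δ := by
      rcases hK.toFinset.eq_empty_or_nonempty with hFe | hFne
      · refine ⟨1, one_pos, fun k hk => absurd ((Set.Finite.mem_toFinset hK).mpr hk) ?_⟩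
        simp [hFe]
      · obtain ⟨k₀, hk₀, hk₀min⟩ :=
          Finset.exists_min_image hK.toFinset (fun k => w.t - k.t - ‖w.x - k.x‖) hFne
        have hk₀K : k₀ ∈ K := (Set.Finite.mem_toFinset hK).mp hk₀
        refine ⟨w.t - k₀.t - ‖w.x - k₀.x‖, by linarith [hstrict k₀ hk₀K], fun k hk => ?_⟩
        have := hk₀min k ((Set.Finite.mem_toFinset hK).mpr hk)
        linarith
    set w' : Mink d := ⟨w.t - δ, w.x⟩ with hw'
    have hw'K : w' ∈ jointFuture K := by
      rw [mem_jointFuture]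
      intro k hk
      rw [Mink.le_iff]
      have := hδ k hk
      have e1 : w'.x - k.x = w.x - k.x := rfl
      have e2 : w'.t - k.t = w.t - k.t - δ := by simp only [hw']; ring
      rw [e1, e2]
      exact this
    have hw'L : w' ∈ jointFuture L := by rw [← hfK]; exact hw'K
    have hple := (Mink.le_iff p w').mp (mem_jointFuture.mp hw'L p hp)
    have e1 : w'.x - p.x = y := by simp only [hw', hw]; abel
    have e2 : w'.t - p.t = ‖y‖ - δ := by simp only [hw', hw]; ring
    rw [e1, e2] at hple
    linarith
  -- Baire category
  obtain ⟨k, hkK, hkint⟩ := ball_cover_aux hK.countable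
    (fun k _ => isClosed_eq ((continuous_id.sub continuous_const).norm)
      (continuous_norm.sub continuous_const)) hρpos hcov
  refine cone_cap_empty_interior hd ?_ hkint
  rintro ⟨hx0, ht0⟩
  apply hpK
  have hkx : k.x = p.x := by
    have := sub_eq_zero.mp hx0
    exact this
  have hkt : k.t = p.t := by linarith [sub_eq_zero.mp (by exact ht0 : k.t - p.t = 0)]
  have : k = p := by
    obtain ⟨kt, kx⟩ := k
    obtain ⟨pt, px⟩ := p
    simp only [Mink.mk.injEq]
    exact ⟨hkt, hkx⟩
  rw [← this]; exact hkK

end Aux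

/-- For every `d ≥ 2`, Minkowski space-time `M_d` with the Minkowski causal order
is a conical poset. -/
theorem mink_conical (d : ℕ) (hd : 2 ≤ d) : Conical (Mink d) := by
  intro L₁ L₂ h1 h2 _ _ hf
  have main : ∀ (A B : Set (Mink d)), A.Finite → B.Finite →
      jointFuture A = jointFuture B → spanS A ⊆ spanS B := by
    intro A B hA hB hAB x hx
    obtain ⟨L', hsub, hxL', hfut, hmin⟩ := hx
    have hmin' : ∀ L'' : Set (Mink d), L'' ⊂ L' → jointFuture L'' ≠ jointFuture L' := by
      intro L'' hss h
      exact hmin L'' hss (h.trans hfut)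
    have hfK : jointFuture B = jointFuture L' := by rw [← hAB, hfut]
    have hsubB : L' ⊆ B := mink_key hd hB hmin' hfK
    exact ⟨L', hsubB, hxL', by rw [hfut, hAB],
      fun L'' hss h => hmin L'' hss (by rw [← hAB] at h; exact h)⟩
  exact Set.Subset.antisymm (main L₁ L₂ h1 h2 hf) (main L₂ L₁ h2 h1 hf.symm)
end

section
/- For every natural number d ≥ 2, the Minkowski causal order on M_d := ℝ × EuclideanSpace ℝ (Fin d) is join-free and meet-free: whenever p, q ∈ M_d are incomparable (neither p ⪯ q nor q ⪯ p), the pair {p, q} has no least upper bound and no greatest lower bound. -/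
open RealInnerProductSpace

namespace MinkProofAux

lemma sqrt_bound (L D : ℝ) (hL : 0 < L) (hD : D < L) :
    ∃ α : ℝ, L ≤ α ∧ D ≤ Real.sqrt (α^2+1) - Real.sqrt ((α-L)^2+1) := by
  set α := L + 1 + max 0 (2*D/(L-D)) with hαdef
  have hmax0 : (0:ℝ) ≤ max 0 (2*D/(L-D)) := le_max_left _ _
  have hαL : L ≤ α := by rw [hαdef]; linarith
  refine ⟨α, hαL, ?_⟩
  set A := Real.sqrt (α^2+1) with hAdef
  set B := Real.sqrt ((α-L)^2+1) with hBdef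
  have hA0 : 0 < A := Real.sqrt_pos.mpr (by positivity)
  have hB0 : 0 < B := Real.sqrt_pos.mpr (by positivity)
  have hA2 : A^2 = α^2+1 := Real.sq_sqrt (by positivity)
  have hB2 : B^2 = (α-L)^2+1 := Real.sq_sqrt (by positivity)
  have hAle : A ≤ α + 1 := by
    rw [hAdef, show α+1 = Real.sqrt ((α+1)^2) from (Real.sqrt_sq (by nlinarith)).symm]
    exact Real.sqrt_le_sqrt (by nlinarith)
  have hBle : B ≤ α - L + 1 := by
    rw [hBdef, show α-L+1 = Real.sqrt ((α-L+1)^2) from (Real.sqrt_sq (by nlinarith)).symm]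
    exact Real.sqrt_le_sqrt (by nlinarith)
  have key : D * (A+B) ≤ L * (2*α - L) := by
    rcases le_or_gt D 0 with hD0 | hD0
    · nlinarith
    · have hLD : L - D ≠ 0 := by linarith
      have hmax : max 0 (2*D/(L-D)) = 2*D/(L-D) :=
        max_eq_right (div_nonneg (by linarith) (by linarith))
      have hc : 2*D/(L-D) * (L-D) = 2*D := div_mul_cancel₀ _ hLD
      have hαeq : α = L + 1 + 2*D/(L-D) := by rw [hαdef, hmax]
      have h2 : (L-D) * (2*α-L) = (L-D)*(L+2) + 4*D := by
        rw [hαeq]; linear_combination 2*hc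
      have h3 : D*(A+B) ≤ D*(2*α-L+2) :=
        mul_le_mul_of_nonneg_left (by linarith) hD0.le
      nlinarith [mul_pos (sub_pos.mpr hD) (show (0:ℝ) < L+2 by linarith)]
  have hAB : (A-B)*(A+B) = L*(2*α-L) := by nlinarith
  nlinarith

lemma exists_orth (d : ℕ) (hd : 2 ≤ d) (e : EuclideanSpace ℝ (Fin d)) :
    ∃ w : EuclideanSpace ℝ (Fin d), ‖w‖ = 1 ∧ ⟪e, w⟫ = 0 := by
  rcases eq_or_ne e 0 with rfl | he
  · refine ⟨EuclideanSpace.single ⟨0, by omega⟩ (1:ℝ), ?_, ?_⟩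
    · simp [EuclideanSpace.norm_single]
    · simp
  · have hK : (ℝ ∙ e)ᗮ ≠ ⊥ := by
      intro h
      have h1 : Module.finrank ℝ (ℝ ∙ e) + Module.finrank ℝ (ℝ ∙ e)ᗮ = d := by
        rw [Submodule.finrank_add_finrank_orthogonal, finrank_euclideanSpace_fin]
      rw [finrank_span_singleton he, h, finrank_bot] at h1
      omega
    obtain ⟨w₀, hw₀mem, hw₀⟩ := Submodule.exists_mem_ne_zero_of_ne_bot hK
    refine ⟨‖w₀‖⁻¹ • w₀, ?_, ?_⟩
    · rw [norm_smul, norm_inv, norm_norm, inv_mul_cancel₀ (norm_ne_zero_iff.mpr hw₀)]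
    · rw [real_inner_smul_right]
      have := (Submodule.mem_orthogonal _ _).mp hw₀mem e (Submodule.mem_span_singleton_self e)
      rw [this, mul_zero]

lemma norm_comb {d : ℕ} {e w : EuclideanSpace ℝ (Fin d)}
    (he : ‖e‖ = 1) (hw : ‖w‖ = 1) (hew : ⟪e, w⟫ = 0) (α s : ℝ) :
    ‖α • e + s • w‖ = Real.sqrt (α^2 + s^2) := by
  have h : ‖α • e + s • w‖^2 = α^2 + s^2 := by
    rw [@norm_add_sq_real, real_inner_smul_left, real_inner_smul_right, hew,
      norm_smul, norm_smul, he, hw]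
    simp [mul_pow, sq_abs]
  rw [← h, Real.sqrt_sq (norm_nonneg _)]

lemma mink_le_def {d : ℕ} (p q : Mink d) : p ≤ q ↔ ‖q.x - p.x‖ ≤ q.t - p.t := Iff.rfl

/-- Key lemma: if `p, q` are incomparable and `m` is a LUB touching the cone of `p`,
contradiction. -/
lemma lemA {d : ℕ} (hd : 2 ≤ d) (p q m : Mink d)
    (h₁ : ¬ p ≤ q) (h₂ : ¬ q ≤ p) (hm : IsLUB ({p, q} : Set (Mink d)) m)
    (heq : ‖m.x - p.x‖ = m.t - p.t) : False := by
  rw [mink_le_def] at h₁ h₂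
  push_neg at h₁ h₂
  set a := p.x with ha
  set b := q.x with hb
  set L := ‖b - a‖ with hL
  set D := q.t - p.t with hDdef
  have hrev : ‖a - b‖ = L := by rw [hL, norm_sub_rev]
  have hDL : D < L := h₁
  have hDL' : -L < D := by
    have := h₂
    rw [hrev] at this
    linarith
  have hLpos : 0 < L := by
    rcases lt_or_ge 0 L with h | h
    · exact h
    · linarith
  -- the unit direction from a to b, and a unit orthogonal direction
  obtain ⟨e, he, hba⟩ : ∃ e : EuclideanSpace ℝ (Fin d), ‖e‖ = 1 ∧ b - a = L • e := by
    refine ⟨L⁻¹ • (b - a), ?_, ?_⟩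
    · rw [norm_smul, norm_inv, norm_norm, ← hL, inv_mul_cancel₀ hLpos.ne']
    · rw [smul_smul, mul_inv_cancel₀ hLpos.ne', one_smul]
  obtain ⟨w, hw1, hew⟩ := exists_orth d hd e
  -- find α' on the intersection of the two cones (with transverse offset 1)
  set f : ℝ → ℝ := fun α => Real.sqrt (α^2+1) - Real.sqrt ((α-L)^2+1) with hf
  have hcont : Continuous f := by
    exact (Real.continuous_sqrt.comp ((continuous_pow 2).add continuous_const)).sub
      (Real.continuous_sqrt.comp (((continuous_id.sub continuous_const).pow 2).add continuous_const))
  obtain ⟨αp, -, hp2⟩ := sqrt_bound L D hLpos hDL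
  obtain ⟨β, -, hβ⟩ := sqrt_bound L (-D) hLpos (by linarith)
  have hflip : f (L - β) ≤ D := by
    have h1 : (L - β)^2 = (β - L)^2 := by ring
    have h2 : (L - β - L)^2 = β^2 := by ring
    simp only [hf, h1, h2]
    linarith
  obtain ⟨α', -, hα'⟩ := intermediate_value_uIcc (f := f) hcont.continuousOn
    (Set.mem_uIcc.mpr (Or.inl ⟨hflip, hp2⟩))
  -- two new upper bounds on both cone boundaries
  set T := p.t + Real.sqrt (α'^2+1) with hT
  have hub : ∀ s : ℝ, s^2 = 1 →
      (⟨T, a + (α' • e + s • w)⟩ : Mink d) ∈ upperBounds ({p, q} : Set (Mink d)) := by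
    intro s hs
    rintro r (rfl | rfl)
    · rw [mink_le_def]
      show ‖a + (α' • e + s • w) - a‖ ≤ T - r.t
      rw [add_sub_cancel_left, norm_comb he hw1 hew, hs, hT]
      linarith
    · rw [mink_le_def]
      show ‖a + (α' • e + s • w) - b‖ ≤ T - r.t
      have hv : a + (α' • e + s • w) - b = (α' - L) • e + s • w := by
        rw [sub_smul, ← hba]
        abel
      rw [hv, norm_comb he hw1 hew, hs, hT]
      have : Real.sqrt ((α' - L)^2 + 1) = Real.sqrt (α'^2 + 1) - D := by
        have := hα'
        simp only [hf] at this
        linarith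
      rw [this, hDdef]
      linarith
  -- m is below both, giving SameRay relations
  set u := m.x - a with hu_def
  have hu : ‖u‖ = m.t - p.t := heq
  have hune : u ≠ 0 := by
    intro h0
    have hmx : m.x = a := by rwa [hu_def, sub_eq_zero] at h0
    have hmt : m.t = p.t := by
      have := hu
      rw [h0, norm_zero] at this
      linarith
    have hqm : q ≤ m := hm.1 (Set.mem_insert_of_mem _ rfl)
    rw [mink_le_def, hmx, hmt] at hqm
    rw [hrev] at hqm
    linarith
  have key : ∀ s : ℝ, s^2 = 1 → ∃ r : ℝ, 0 ≤ r ∧ (1+r) * ⟪u, w⟫ = s := by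
    intro s hs
    have hle := hm.2 (hub s hs)
    rw [mink_le_def] at hle
    have hle' : ‖(α' • e + s • w) - u‖ ≤ ‖α' • e + s • w‖ - ‖u‖ := by
      have hx : (⟨T, a + (α' • e + s • w)⟩ : Mink d).x - m.x = (α' • e + s • w) - u := by
        show a + (α' • e + s • w) - m.x = (α' • e + s • w) - u
        rw [hu_def]; abel
      have ht : (⟨T, a + (α' • e + s • w)⟩ : Mink d).t - m.t
          = ‖α' • e + s • w‖ - ‖u‖ := by
        show T - m.t = _
        rw [hT, norm_comb he hw1 hew, hs]
        linarith [hu]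
      rw [hx, ht] at hle
      exact hle
    have heqn : ‖u + ((α' • e + s • w) - u)‖ = ‖u‖ + ‖(α' • e + s • w) - u‖ := by
      have h1 : u + ((α' • e + s • w) - u) = α' • e + s • w := by abel
      rw [h1]
      have := norm_add_le u ((α' • e + s • w) - u)
      rw [h1] at this
      linarith
    have hsr : SameRay ℝ u ((α' • e + s • w) - u) := sameRay_iff_norm_add.mpr heqn
    obtain ⟨r, hr0, hr⟩ := hsr.exists_nonneg_left hune
    refine ⟨r, hr0, ?_⟩
    have hus : α' • e + s • w = (1 + r) • u := by
      rw [add_smul, one_smul, hr]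
      abel
    have h5 : ⟪α' • e + s • w, w⟫ = s := by
      rw [inner_add_left, real_inner_smul_left, real_inner_smul_left, hew,
        real_inner_self_eq_norm_sq, hw1]
      ring
    rw [hus, real_inner_smul_left] at h5
    exact h5
  obtain ⟨r₁, hr₁0, hr₁⟩ := key 1 (by norm_num)
  obtain ⟨r₂, hr₂0, hr₂⟩ := key (-1) (by norm_num)
  nlinarith [hr₁, hr₂]

def neg {d : ℕ} (p : Mink d) : Mink d := ⟨-p.t, -p.x⟩

lemma neg_le {d : ℕ} {p q : Mink d} : neg q ≤ neg p ↔ p ≤ q := by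
  rw [mink_le_def, mink_le_def]
  show ‖(-p.x) - (-q.x)‖ ≤ (-p.t) - (-q.t) ↔ _
  rw [show (-p.x) - (-q.x) = q.x - p.x by abel]
  constructor <;> intro h <;> linarith

lemma neg_neg' {d : ℕ} (p : Mink d) : neg (neg p) = p := by
  cases p; simp [neg]

lemma noLUB {d : ℕ} (hd : 2 ≤ d) (p q : Mink d)
    (h₁ : ¬ p ≤ q) (h₂ : ¬ q ≤ p) :
    ¬ ∃ m : Mink d, IsLUB ({p, q} : Set (Mink d)) m := by
  rintro ⟨m, hm⟩
  have hpm : p ≤ m := hm.1 (Set.mem_insert _ _)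
  have hqm : q ≤ m := hm.1 (Set.mem_insert_of_mem _ rfl)
  rw [mink_le_def] at hpm hqm
  by_cases hp : ‖m.x - p.x‖ = m.t - p.t
  · exact lemA hd p q m h₁ h₂ hm hp
  by_cases hq : ‖m.x - q.x‖ = m.t - q.t
  · exact lemA hd q p m h₂ h₁ (by rwa [Set.pair_comm]) hq
  · clear h₁ h₂
    set ε := min (m.t - p.t - ‖m.x - p.x‖) (m.t - q.t - ‖m.x - q.x‖) with hε
    have hεpos : 0 < ε :=
      lt_min (by cases lt_or_eq_of_le hpm with
        | inl h => linarith
        | inr h => exact absurd h hp)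
        (by cases lt_or_eq_of_le hqm with
        | inl h => linarith
        | inr h => exact absurd h hq)
    have hub : (⟨m.t - ε, m.x⟩ : Mink d) ∈ upperBounds ({p, q} : Set (Mink d)) := by
      rintro r (rfl | rfl)
      · rw [mink_le_def]
        show ‖m.x - r.x‖ ≤ m.t - ε - r.t
        have := min_le_left (m.t - r.t - ‖m.x - r.x‖) (m.t - q.t - ‖m.x - q.x‖)
        rw [← hε] at this
        linarith
      · rw [mink_le_def]
        show ‖m.x - r.x‖ ≤ m.t - ε - r.t
        have := min_le_right (m.t - p.t - ‖m.x - p.x‖) (m.t - r.t - ‖m.x - r.x‖)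
        rw [← hε] at this
        linarith
    have := hm.2 hub
    rw [mink_le_def] at this
    simp only [sub_self, norm_zero] at this
    show False
    have : (0:ℝ) ≤ m.t - ε - m.t := this
    linarith

end MinkProofAux

namespace MinkProofAux

lemma neg_le' {d : ℕ} {p q : Mink d} (h : p ≤ q) : neg q ≤ neg p :=
  neg_le.mpr h

lemma le_of_neg_le {d : ℕ} {p q : Mink d} (h : neg q ≤ neg p) : p ≤ q :=
  neg_le.mp h

end MinkProofAux

open MinkProofAux in
/-- For `d ≥ 2`, Minkowski space-time is join-free and meet-free: any two
incomparable points `p, q` have no least upper bound and no greatest lower bound. -/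
theorem mink_joinFree_meetFree (d : ℕ) (hd : 2 ≤ d) (p q : Mink d)
    (h₁ : ¬ p ≤ q) (h₂ : ¬ q ≤ p) :
    (¬ ∃ m : Mink d, IsLUB ({p, q} : Set (Mink d)) m) ∧
    (¬ ∃ m : Mink d, IsGLB ({p, q} : Set (Mink d)) m) := by
  refine ⟨noLUB hd p q h₁ h₂, ?_⟩
  rintro ⟨m, hm⟩
  have hn₁ : ¬ neg p ≤ neg q := fun h => h₂ (le_of_neg_le h)
  have hn₂ : ¬ neg q ≤ neg p := fun h => h₁ (le_of_neg_le h)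
  apply noLUB hd (neg p) (neg q) hn₁ hn₂
  refine ⟨neg m, ?_, ?_⟩
  · rintro r (rfl | rfl)
    · exact neg_le' (hm.1 (Set.mem_insert _ _))
    · exact neg_le' (hm.1 (Set.mem_insert_of_mem _ rfl))
  · intro n hn
    have h1 : neg p ≤ n := hn (Set.mem_insert _ _)
    have h2 : neg q ≤ n := hn (Set.mem_insert_of_mem _ rfl)
    have hlb : neg n ∈ lowerBounds ({p, q} : Set (Mink d)) := by
      rintro r (rfl | rfl)
      · have h1' : neg r ≤ neg (neg n) := by rwa [neg_neg' n]
        exact le_of_neg_le h1'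
      · have h2' : neg r ≤ neg (neg n) := by rwa [neg_neg' n]
        exact le_of_neg_le h2'
    have hfin := hm.2 hlb
    have : neg m ≤ neg (neg n) := neg_le' hfin
    rwa [neg_neg' n] at this
end

section
/- Every conical poset is join-free: if T is a conical partially ordered set and a, b ∈ T are such that {a, b} has a least upper bound, then a ≤ b or b ≤ a. -/
/-- Every conical poset is join-free: if `{a, b}` has a least upper bound,
then `a` and `b` are comparable. -/
theorem conical_joinFree {T : Type*} [PartialOrder T] (hT : Conical T)
    (a b m : T) (h : IsLUB ({a, b} : Set T) m) : a ≤ b ∨ b ≤ a := by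
  have ham : a ≤ m := h.1 (by simp [Set.mem_insert_iff])
  have hbm : b ≤ m := h.1 (by simp)
  by_cases htop : ∀ q : T, m ≤ q
  · -- then a = m = b
    have : a = m := le_antisymm ham (htop a)
    have hb : b = m := le_antisymm hbm (htop b)
    left; rw [this, hb]
  · push_neg at htop
    obtain ⟨q, hq⟩ := htop
    have hfut : jointFuture ({a, b} : Set T) = jointFuture ({m} : Set T) := by
      ext x
      simp only [jointFuture, Jplus, Set.mem_iInter, Set.mem_setOf_eq,
        Set.mem_insert_iff, Set.mem_singleton_iff]
      constructor
      · intro hx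
        intro p hp; subst hp
        exact h.2 (fun y hy => by rcases hy with rfl | rfl
                                  · exact hx _ (Or.inl rfl)
                                  · exact hx _ (Or.inr rfl))
      · intro hx p hp
        have hm := hx m rfl
        rcases hp with rfl | rfl
        · exact ham.trans hm
        · exact hbm.trans hm
    have hspan := hT {a, b} {m} ((Set.finite_singleton b).insert a)
      (Set.finite_singleton m) ⟨a, Or.inl rfl⟩ ⟨m, rfl⟩ hfut
    have hmem : m ∈ spanS ({m} : Set T) := by
      refine ⟨{m}, subset_rfl, rfl, rfl, ?_⟩
      intro L'' hL'' hcon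
      have hL''e : L'' = ∅ := by
        rcases (Set.subset_singleton_iff_eq).mp hL''.1 with h' | h'
        · exact h'
        · exact absurd h' hL''.ne
      subst hL''e
      have : q ∈ jointFuture (∅ : Set T) := by simp [jointFuture]
      rw [hcon] at this
      simp only [jointFuture, Jplus, Set.mem_iInter, Set.mem_setOf_eq,
        Set.mem_singleton_iff] at this
      exact hq (this m rfl)
    rw [← hspan] at hmem
    obtain ⟨L', hL'sub, hmL', _, _⟩ := hmem
    have : m = a ∨ m = b := by
      have := hL'sub hmL'
      simpa using this
    rcases this with rfl | rfl
    · right; exact hbm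
    · left; exact ham
end

section
/- A partially ordered set T is conical if and only if it satisfies location symmetry. -/
/-- Location symmetry: for every nonempty index type `I`, every finite `K ⊆ T` and
every family `(L i)` of nonempty finite subsets of `T` with
`f(K) ∩ f(L i) = f(K) ∩ f(L j)` for all `i, j`, either `f(K) ⊆ ⋂ i, f(L i)`, or
there is a nonempty `M ⊆ T` with `span(K ∪ L i) ∖ K = M` for all `i`. -/
def LocationSymmetry (T : Type*) [PartialOrder T] : Prop :=
  ∀ (I : Type) (_ : Nonempty I) (K : Set T) (L : I → Set T),
    K.Finite → (∀ i, (L i).Finite) → (∀ i, (L i).Nonempty) →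
    (∀ i j, jointFuture K ∩ jointFuture (L i) = jointFuture K ∩ jointFuture (L j)) →
    (jointFuture K ⊆ ⋂ i, jointFuture (L i)) ∨
    (∃ M : Set T, M.Nonempty ∧ ∀ i, spanS (K ∪ L i) \ K = M)

lemma jointFuture_antitone {T : Type*} [PartialOrder T] {A B : Set T} (h : A ⊆ B) :
    jointFuture B ⊆ jointFuture A := by
  unfold jointFuture
  exact Set.biInter_subset_biInter_left h

lemma jointFuture_union {T : Type*} [PartialOrder T] (A B : Set T) :
    jointFuture (A ∪ B) = jointFuture A ∩ jointFuture B := by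
  unfold jointFuture
  exact Set.biInter_union A B _

lemma jointFuture_empty {T : Type*} [PartialOrder T] :
    jointFuture (∅ : Set T) = Set.univ := by
  simp [jointFuture]

lemma exists_min_aux {T : Type*} [PartialOrder T] :
    ∀ n (L : Set T), L.Finite → L.ncard = n →
    ∃ L', L' ⊆ L ∧ jointFuture L' = jointFuture L ∧
      ∀ L'', L'' ⊂ L' → jointFuture L'' ≠ jointFuture L := by
  intro n
  induction n using Nat.strong_induction_on with
  | _ n ih =>
    intro L hL hn
    by_cases h : ∃ L'', L'' ⊂ L ∧ jointFuture L'' = jointFuture L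
    · obtain ⟨L'', hsub, hf⟩ := h
      have hfin : L''.Finite := hL.subset hsub.subset
      have hlt : L''.ncard < n := hn ▸ Set.ncard_lt_ncard hsub hL
      obtain ⟨L', h1, h2, h3⟩ := ih _ hlt L'' hfin rfl
      exact ⟨L', h1.trans hsub.subset, h2.trans hf,
        fun L₃ hlt' heq => h3 L₃ hlt' (heq.trans hf.symm)⟩
    · exact ⟨L, subset_rfl, rfl, fun L'' hlt heq => h ⟨L'', hlt, heq⟩⟩

lemma exists_min {T : Type*} [PartialOrder T] (L : Set T) (hL : L.Finite) :
    ∃ L', L' ⊆ L ∧ jointFuture L' = jointFuture L ∧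
      ∀ L'', L'' ⊂ L' → jointFuture L'' ≠ jointFuture L :=
  exists_min_aux L.ncard L hL rfl

lemma spanS_eq_empty_of_univ {T : Type*} [PartialOrder T] {L : Set T}
    (h : jointFuture L = Set.univ) : spanS L = ∅ := by
  ext x
  simp only [Set.mem_empty_iff_false, iff_false]
  rintro ⟨L', hsub, hx, hf, hmin⟩
  exact hmin ∅ (Set.empty_ssubset.mpr ⟨x, hx⟩) (jointFuture_empty.trans h.symm)

/-- A partially ordered set is conical if and only if it satisfies location symmetry. -/
theorem conical_iff_locationSymmetry (T : Type*) [PartialOrder T] :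
    Conical T ↔ LocationSymmetry T := by
  constructor
  · intro hC I hI K L hK hLfin hLne hEq
    obtain ⟨i₀⟩ := hI
    have key : ∀ i, spanS (K ∪ L i) = spanS (K ∪ L i₀) := by
      intro i
      apply hC _ _ (hK.union (hLfin i)) (hK.union (hLfin i₀))
        ((hLne i).inr) ((hLne i₀).inr)
      rw [jointFuture_union, jointFuture_union]
      exact hEq i i₀
    by_cases h : (spanS (K ∪ L i₀) \ K).Nonempty
    · right
      exact ⟨spanS (K ∪ L i₀) \ K, h, fun i => by rw [key i]⟩
    · left
      rw [Set.not_nonempty_iff_eq_empty, Set.diff_eq_empty] at h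
      intro x hx
      rw [Set.mem_iInter]
      intro i
      obtain ⟨L', hsub, hf, hmin⟩ := exists_min (K ∪ L i) (hK.union (hLfin i))
      have hspan : L' ⊆ spanS (K ∪ L i) := fun y hy => ⟨L', hsub, hy, hf, hmin⟩
      have hLK : L' ⊆ K := (hspan.trans (key i).subset).trans h
      have : jointFuture K ⊆ jointFuture (L' : Set T) := jointFuture_antitone hLK
      have h2 : jointFuture K ⊆ jointFuture (K ∪ L i) := this.trans hf.subset
      rw [jointFuture_union] at h2
      exact (h2 hx).2
  · intro hLS L₁ L₂ h1f h2f h1n h2n heq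
    have := hLS Bool ⟨true⟩ ∅ (fun b => if b then L₁ else L₂)
      Set.finite_empty
      (fun b => by cases b <;> simpa)
      (fun b => by cases b <;> simpa)
      (fun i j => by
        cases i <;> cases j <;> simp [jointFuture_empty, heq])
    rcases this with h | ⟨M, _, hM⟩
    · have h1 : jointFuture L₁ = Set.univ := by
        apply Set.eq_univ_of_univ_subset
        rw [jointFuture_empty] at h
        refine (h.trans ?_)
        have := Set.iInter_subset (fun b : Bool => jointFuture (if b then L₁ else L₂)) true
        simpa using this
      rw [spanS_eq_empty_of_univ h1, spanS_eq_empty_of_univ (heq ▸ h1)]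
    · have hT := hM true
      have hF := hM false
      simp only [if_true, Bool.false_eq_true, if_false, Set.empty_union, Set.diff_empty] at hT hF
      rw [hT, hF]
end

section
/- Let D be an intervention family on V whose induced affects relations contain no relation that is Clus₃. Let T be any partially ordered set and O : V → T a map such that compat holds. Then for every affects relation X ⊨ Y|do(Z) that holds and is both Irred₁ and Irred₃, one has F̄_s(Y) ⊆ F̄_s(X) ∩ F̄_s(Z). -/
/-- An intervention family on a finite type `V` of observed variables with value
types `α i`: to every finite subset `I ⊆ V` and every assignment of values on `I`
it assigns a probability mass function on full assignments. -/
abbrev InterventionFamily (V : Type) [DecidableEq V] (α : V → Type) : Type :=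
  ∀ I : Finset V, (∀ i : I, α i) → PMF (∀ i, α i)

/-- Restriction of a full assignment to the coordinates in `Y`. -/
def restrictTo {V : Type} {α : V → Type} (Y : Finset V) (g : ∀ i, α i) :
    ∀ i : Y, α i := fun i => g i

/-- Combination of an assignment on `X` and an assignment on `Z` into an
assignment on `X ∪ Z` (giving precedence to the one on `X`). -/
def combine {V : Type} [DecidableEq V] {α : V → Type} {X Z : Finset V}
    (xv : ∀ i : X, α i) (zv : ∀ i : Z, α i) : ∀ i : (X ∪ Z : Finset V), α i :=
  fun i => if h : (i : V) ∈ X then xv ⟨i, h⟩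
    else zv ⟨i, (Finset.mem_union.mp i.2).resolve_left h⟩

/-- The affects relation `X ⊨ Y|do(Z)`: there exist assignments `x` on `X` and `z`
on `Z` such that the marginal on `Y` of the intervened distribution `D (X∪Z) (x⊕z)`
differs from the marginal on `Y` of `D Z z`. -/
def affects {V : Type} [DecidableEq V] {α : V → Type}
    (D : InterventionFamily V α) (X Y Z : Finset V) : Prop :=
  ∃ (xv : ∀ i : X, α i) (zv : ∀ i : Z, α i),
    PMF.map (restrictTo Y) (D (X ∪ Z) (combine xv zv)) ≠
      PMF.map (restrictTo Y) (D Z zv)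

/-- `X ⊨ Y|do(Z)` is Clus₃ if it holds, `Z ≠ ∅`, and no `s_Z ⊊ Z` satisfies
`X ⊨ Y|do(s_Z)`. -/
def Clus3 {V : Type} [DecidableEq V] {α : V → Type}
    (D : InterventionFamily V α) (X Y Z : Finset V) : Prop :=
  affects D X Y Z ∧ Z.Nonempty ∧
    ∀ sZ : Finset V, sZ ⊂ Z → ¬ affects D X Y sZ

/-- `X ⊨ Y|do(Z)` is Irred₁ if for every nonempty `s_X ⊊ X`,
`s_X ⊨ Y|do((X∖s_X) ∪ Z)` holds. -/
def Irred1 {V : Type} [DecidableEq V] {α : V → Type}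
    (D : InterventionFamily V α) (X Y Z : Finset V) : Prop :=
  ∀ sX : Finset V, sX ⊆ X → sX.Nonempty → sX ≠ X → affects D sX Y ((X \ sX) ∪ Z)

/-- `X ⊨ Y|do(Z)` is Irred₃ if for every nonempty `s_Z ⊆ Z`,
`s_Z ⊨ Y|do(X ∪ (Z∖s_Z))` holds or `s_Z ⊨ Y|do(Z∖s_Z)` holds. -/
def Irred3 {V : Type} [DecidableEq V] {α : V → Type}
    (D : InterventionFamily V α) (X Y Z : Finset V) : Prop :=
  ∀ sZ : Finset V, sZ ⊆ Z → sZ.Nonempty →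
    (affects D sZ Y (X ∪ (Z \ sZ)) ∨ affects D sZ Y (Z \ sZ))

/-- The support future `F̄_s(W) = ⋂_{w ∈ W} {t : O w ≤ t}` of a finite set of
variables under an embedding `O` into a space-time (with `F̄_s(∅) = T`). -/
def suppFuture {V : Type} {T : Type*} [PartialOrder T] (O : V → T) (W : Finset V) :
    Set T := ⋂ w ∈ W, {t : T | O w ≤ t}

/-- The embedding `O` satisfies compat if for every holding affects relation
`X ⊨ Y|do(Z)` (on pairwise disjoint finite sets with `X, Y` nonempty) that is
Irred₁, one has `F̄_s(Y ∪ Z) ⊆ F̄_s(X)`. -/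
def Compat {V : Type} [DecidableEq V] {α : V → Type} {T : Type*} [PartialOrder T]
    (D : InterventionFamily V α) (O : V → T) : Prop :=
  ∀ X Y Z : Finset V, Disjoint X Y → Disjoint X Z → Disjoint Y Z →
    X.Nonempty → Y.Nonempty → affects D X Y Z → Irred1 D X Y Z →
    suppFuture O (Y ∪ Z) ⊆ suppFuture O X

-- Descent lemma.
lemma affects_descent {V : Type} [DecidableEq V] {α : V → Type}
    (D : InterventionFamily V α)
    (hnoclus : ∀ X Y Z : Finset V, Disjoint X Y → Disjoint X Z → Disjoint Y Z →
      X.Nonempty → Y.Nonempty → ¬ Clus3 D X Y Z)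
    (X Y : Finset V) (hXY : Disjoint X Y) (hX : X.Nonempty) (hY : Y.Nonempty)
    (Z : Finset V) :
    Disjoint X Z → Disjoint Y Z → affects D X Y Z → affects D X Y ∅ := by
  induction Z using Finset.strongInduction with
  | _ Z ih =>
    intro hXZ hYZ haff
    rcases Z.eq_empty_or_nonempty with rfl | hZne
    · exact haff
    · have hnc := hnoclus X Y Z hXY hXZ hYZ hX hY
      unfold Clus3 at hnc
      push_neg at hnc
      obtain ⟨sZ, hsub, haff'⟩ := hnc haff hZne
      exact ih sZ hsub (hXZ.mono_right hsub.subset) (hYZ.mono_right hsub.subset) haff'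

lemma irred1_singleton {V : Type} [DecidableEq V] {α : V → Type}
    (D : InterventionFamily V α) (x : V) (Y Z : Finset V) :
    Irred1 D {x} Y Z := by
  intro sX hsub hne hneq
  exfalso
  rcases Finset.subset_singleton_iff.mp hsub with rfl | rfl
  · exact hne.ne_empty rfl
  · exact hneq rfl

/-- If the affects relations induced by `D` contain no Clus₃ relation and the
embedding `O` into an arbitrary space-time satisfies compat, then every holding
affects relation `X ⊨ Y|do(Z)` that is both Irred₁ and Irred₃ satisfies
`F̄_s(Y) ⊆ F̄_s(X) ∩ F̄_s(Z)`. -/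
theorem compat_no_clus3 {V : Type} [Fintype V] [DecidableEq V] {α : V → Type}
    [∀ i, Fintype (α i)] [∀ i, Nonempty (α i)]
    (D : InterventionFamily V α)
    (hnoclus : ∀ X Y Z : Finset V, Disjoint X Y → Disjoint X Z → Disjoint Y Z →
      X.Nonempty → Y.Nonempty → ¬ Clus3 D X Y Z)
    {T : Type*} [PartialOrder T] (O : V → T) (hc : Compat D O)
    (X Y Z : Finset V)
    (hXY : Disjoint X Y) (hXZ : Disjoint X Z) (hYZ : Disjoint Y Z)
    (hX : X.Nonempty) (hY : Y.Nonempty)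
    (haff : affects D X Y Z) (h1 : Irred1 D X Y Z) (h3 : Irred3 D X Y Z) :
    suppFuture O Y ⊆ suppFuture O X ∩ suppFuture O Z := by
  -- key step: for any single variable v with some holding relation {v} ⊨ Y|do(C),
  -- we get F̄(Y) ⊆ F̄({v})
  have key : ∀ (v : V) (C : Finset V), v ∉ Y → Disjoint ({v} : Finset V) C →
      Disjoint Y C → affects D {v} Y C → suppFuture O Y ⊆ {t : T | O v ≤ t} := by
    intro v C hvY hvC hYC haffv
    have hdXY : Disjoint ({v} : Finset V) Y := Finset.disjoint_singleton_left.mpr hvY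
    have haff0 : affects D {v} Y ∅ :=
      affects_descent D hnoclus {v} Y hdXY (Finset.singleton_nonempty v) hY C hvC hYC haffv
    have hsub := hc {v} Y ∅ hdXY (Finset.disjoint_empty_right _)
      (Finset.disjoint_empty_right _) (Finset.singleton_nonempty v) hY haff0
      (irred1_singleton D v Y ∅)
    rw [Finset.union_empty] at hsub
    intro t ht
    have := hsub ht
    simpa [suppFuture] using this
  intro t ht
  constructor
  · simp only [suppFuture, Set.mem_iInter, Set.mem_setOf_eq]
    intro x hx
    have hxY : x ∉ Y := Finset.disjoint_left.mp hXY hx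
    by_cases hxs : ({x} : Finset V) = X
    · -- X = {x}: use the relation itself
      exact key x Z hxY (hxs ▸ hXZ) hYZ (hxs ▸ haff) ht
    · -- {x} ⊊ X: use Irred₁
      have haffx := h1 {x} (Finset.singleton_subset_iff.mpr hx)
        (Finset.singleton_nonempty x) hxs
      have hvC : Disjoint ({x} : Finset V) ((X \ {x}) ∪ Z) := by
        rw [Finset.disjoint_union_right]
        exact ⟨disjoint_sdiff_self_right,
          Finset.disjoint_singleton_left.mpr (Finset.disjoint_left.mp hXZ hx)⟩
      have hYC : Disjoint Y ((X \ {x}) ∪ Z) := by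
        rw [Finset.disjoint_union_right]
        exact ⟨(hXY.symm.mono_right (Finset.sdiff_subset)), hYZ⟩
      exact key x ((X \ {x}) ∪ Z) hxY hvC hYC haffx ht
  · simp only [suppFuture, Set.mem_iInter, Set.mem_setOf_eq]
    intro z hz
    have hzY : z ∉ Y := fun h => Finset.disjoint_left.mp hYZ h hz
    have hzX : z ∉ X := fun h => Finset.disjoint_left.mp hXZ h hz
    rcases h3 {z} (Finset.singleton_subset_iff.mpr hz) (Finset.singleton_nonempty z)
      with haffz | haffz
    · have hvC : Disjoint ({z} : Finset V) (X ∪ (Z \ {z})) := by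
        rw [Finset.disjoint_union_right]
        exact ⟨Finset.disjoint_singleton_left.mpr hzX,
          disjoint_sdiff_self_right⟩
      have hYC : Disjoint Y (X ∪ (Z \ {z})) := by
        rw [Finset.disjoint_union_right]
        exact ⟨hXY.symm, hYZ.mono_right (Finset.sdiff_subset)⟩
      exact key z (X ∪ (Z \ {z})) hzY hvC hYC haffz ht
    · have hvC : Disjoint ({z} : Finset V) (Z \ {z}) :=
        disjoint_sdiff_self_right
      have hYC : Disjoint Y (Z \ {z}) := hYZ.mono_right (Finset.sdiff_subset)
      exact key z (Z \ {z}) hzY hvC hYC haffz ht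
end

section
/- Let D be an intervention family on V and let X, Y, Z be pairwise disjoint finite subsets of V with X, Y nonempty. If X ⊨ Y|do(Z) holds and is Red₁, i.e., there is a nonempty s_X ⊊ X with s_X ⊭ Y|do((X∖s_X) ∪ Z), then (X∖s_X) ⊨ Y|do(Z) holds; in particular there exists a nonempty strict subset s̃_X ⊊ X with s̃_X ⊨ Y|do(Z). -/
/-- If `X ⊨ Y|do(Z)` holds and is Red₁, witnessed by a nonempty `s_X ⊊ X` with
`s_X ⊭ Y|do((X∖s_X) ∪ Z)`, then `(X∖s_X) ⊨ Y|do(Z)` holds; in particular there is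
a nonempty strict subset `s̃_X ⊊ X` with `s̃_X ⊨ Y|do(Z)`. -/
theorem red1_reduce {V : Type} [Fintype V] [DecidableEq V] {α : V → Type}
    [∀ i, Fintype (α i)] [∀ i, Nonempty (α i)]
    (D : InterventionFamily V α) (X Y Z : Finset V)
    (hXY : Disjoint X Y) (hXZ : Disjoint X Z) (hYZ : Disjoint Y Z)
    (hX : X.Nonempty) (hY : Y.Nonempty)
    (haff : affects D X Y Z)
    (sX : Finset V) (hsub : sX ⊆ X) (hne : sX.Nonempty) (hne' : sX ≠ X)
    (hred : ¬ affects D sX Y ((X \ sX) ∪ Z)) :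
    affects D (X \ sX) Y Z ∧
      ∃ s : Finset V, s ⊂ X ∧ s.Nonempty ∧ affects D s Y Z := by
  have D_congr : ∀ {A B : Finset V} (h : A = B) (a : ∀ i : A, α i) (b : ∀ i : B, α i),
      (∀ (i : V) (hi : i ∈ A), a ⟨i, hi⟩ = b ⟨i, h ▸ hi⟩) → D A a = D B b := by
    intro A B h a b hab
    subst h
    congr 1
    funext i
    exact hab i i.2
  simp only [affects, not_exists, not_not] at hred
  obtain ⟨xv, zv, hne0⟩ := haff
  set rv : ∀ i : (X \ sX : Finset V), α i :=
    fun i => xv ⟨i, (Finset.mem_sdiff.mp i.2).1⟩ with hrv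
  set sv : ∀ i : (sX : Finset V), α i := fun i => xv ⟨i, hsub i.2⟩ with hsv
  have key : D (sX ∪ ((X \ sX) ∪ Z)) (combine sv (combine rv zv)) =
      D (X ∪ Z) (combine xv zv) := by
    apply D_congr (by rw [← Finset.union_assoc, Finset.union_sdiff_of_subset hsub])
    intro i hi
    simp only [combine, hrv, hsv]
    by_cases h1 : i ∈ sX
    · have h2 : i ∈ X := hsub h1
      simp [h1, h2]
    · simp only [h1, dite_false]
      by_cases h3 : i ∈ X \ sX
      · have h2 : i ∈ X := (Finset.mem_sdiff.mp h3).1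
        simp [h3, h2]
      · have h2 : i ∉ X := fun hx => h3 (Finset.mem_sdiff.mpr ⟨hx, h1⟩)
        simp [h3, h2]
  have haffd : affects D (X \ sX) Y Z := by
    refine ⟨rv, zv, ?_⟩
    have h1 := hred sv (combine rv zv)
    rw [key] at h1
    rw [← h1]
    exact hne0
  refine ⟨haffd, X \ sX, Finset.sdiff_ssubset hsub hne,
    Finset.sdiff_nonempty.mpr (fun h => hne' (Finset.Subset.antisymm hsub h)), haffd⟩
end

section
/- Let D be an intervention family on V and let X, Y, Z be pairwise disjoint finite subsets of V with X, Y nonempty. If X ⊨ Y|do(Z) holds and is Red₃, i.e., there is a nonempty s_Z ⊆ Z with both s_Z ⊭ Y|do(X ∪ (Z∖s_Z)) and s_Z ⊭ Y|do(Z∖s_Z), then X ⊨ Y|do(Z∖s_Z) holds; in particular there exists s̃_Z ⊊ Z with X ⊨ Y|do(s̃_Z). -/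
private lemma congr_D {V : Type} [DecidableEq V] {α : V → Type}
    (D : InterventionFamily V α) {A B : Finset V} (h : A = B)
    {f : ∀ i : A, α i} {g : ∀ i : B, α i}
    (hfg : ∀ i (hA : i ∈ A) (hB : i ∈ B), f ⟨i, hA⟩ = g ⟨i, hB⟩) :
    D A f = D B g := by
  subst h
  congr 1
  funext i
  exact hfg i.1 i.2 i.2
/-- If `X ⊨ Y|do(Z)` holds and is Red₃, witnessed by a nonempty `s_Z ⊆ Z` with
both `s_Z ⊭ Y|do(X ∪ (Z∖s_Z))` and `s_Z ⊭ Y|do(Z∖s_Z)`, then `X ⊨ Y|do(Z∖s_Z)`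
holds; in particular there is a strict subset `s̃_Z ⊊ Z` with `X ⊨ Y|do(s̃_Z)`. -/
theorem red3_reduce {V : Type} [Fintype V] [DecidableEq V] {α : V → Type}
    [∀ i, Fintype (α i)] [∀ i, Nonempty (α i)]
    (D : InterventionFamily V α) (X Y Z : Finset V)
    (hXY : Disjoint X Y) (hXZ : Disjoint X Z) (hYZ : Disjoint Y Z)
    (hX : X.Nonempty) (hY : Y.Nonempty)
    (haff : affects D X Y Z)
    (sZ : Finset V) (hsub : sZ ⊆ Z) (hne : sZ.Nonempty)
    (hred1 : ¬ affects D sZ Y (X ∪ (Z \ sZ)))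
    (hred2 : ¬ affects D sZ Y (Z \ sZ)) :
    affects D X Y (Z \ sZ) ∧
      ∃ s : Finset V, s ⊂ Z ∧ affects D X Y s := by
  obtain ⟨xv, zv, hne'⟩ := haff
  simp only [affects, not_exists, not_ne_iff] at hred1 hred2 ⊢
  set W := Z \ sZ with hW
  have hsv : ∀ i : sZ, (i : V) ∈ Z := fun i => hsub i.2
  set sv : ∀ i : sZ, α i := fun i => zv ⟨i, hsv i⟩ with hsvdef
  set wv : ∀ i : W, α i := fun i => zv ⟨i, (Finset.mem_sdiff.mp i.2).1⟩ with hwvdef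
  have hA : X ∪ Z = sZ ∪ (X ∪ W) := by
    ext i
    have := @hsub i
    simp only [Finset.mem_union, Finset.mem_sdiff, hW]
    constructor
    · rintro (h | h)
      · tauto
      · by_cases hs : i ∈ sZ <;> tauto
    · tauto
  have hB : Z = sZ ∪ W := by
    ext i
    have := @hsub i
    simp only [Finset.mem_union, Finset.mem_sdiff, hW]
    by_cases hs : i ∈ sZ <;> tauto
  have hXs : ∀ i, i ∈ X → i ∉ sZ := fun i hi hs =>
    (Finset.disjoint_left.mp hXZ) hi (hsub hs)
  have e1 : D (X ∪ Z) (combine xv zv) = D (sZ ∪ (X ∪ W)) (combine sv (combine xv wv)) := by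
    apply congr_D D hA
    intro i hiA hiB
    simp only [combine]
    by_cases hx : i ∈ X
    · rw [dif_pos hx, dif_neg (hXs i hx), dif_pos hx]
    · rw [dif_neg hx]
      by_cases hs : i ∈ sZ
      · rw [dif_pos hs]
      · rw [dif_neg hs, dif_neg hx]
  have e2 : D Z zv = D (sZ ∪ W) (combine sv wv) := by
    apply congr_D D hB
    intro i hiA hiB
    simp only [combine]
    by_cases hs : i ∈ sZ
    · rw [dif_pos hs]
    · rw [dif_neg hs]
  refine ⟨⟨xv, wv, ?_⟩, Z \ sZ, Finset.sdiff_ssubset hsub hne, xv, wv, ?_⟩ <;>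
  · intro h
    apply hne'
    rw [e1, hred1 sv (combine xv wv), h, ← hred2 sv wv, ← e2]
end

section
/- Let D be an intervention family on V and let X, Y, Z be pairwise disjoint finite subsets of V with X, Y nonempty. If X ⊨ Y|do(Z) holds and is Clus₁ (that is, |X| ≥ 2 and no nonempty s_X ⊊ X satisfies s_X ⊨ Y|do(Z)), then it is Irred₁: for every nonempty s_X ⊊ X, the affects relation s_X ⊨ Y|do((X∖s_X) ∪ Z) holds. -/
lemma D_congr {V : Type} [DecidableEq V] {α : V → Type}
    (D : InterventionFamily V α) {I J : Finset V} (h : I = J)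
    (a : ∀ i : I, α i) (b : ∀ i : J, α i)
    (hab : ∀ (i : V) (hi : i ∈ I) (hj : i ∈ J), a ⟨i, hi⟩ = b ⟨i, hj⟩) :
    D I a = D J b := by
  subst h
  congr 1
  funext i
  exact hab i i.2 i.2

/-- If `X ⊨ Y|do(Z)` holds and is Clus₁ (`|X| ≥ 2` and no nonempty `s_X ⊊ X`
satisfies `s_X ⊨ Y|do(Z)`), then it is Irred₁: for every nonempty `s_X ⊊ X`,
`s_X ⊨ Y|do((X∖s_X) ∪ Z)` holds. -/
theorem clus1_implies_irred1 {V : Type} [Fintype V] [DecidableEq V] {α : V → Type}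
    [∀ i, Fintype (α i)] [∀ i, Nonempty (α i)]
    (D : InterventionFamily V α) (X Y Z : Finset V)
    (hXY : Disjoint X Y) (hXZ : Disjoint X Z) (hYZ : Disjoint Y Z)
    (hX : X.Nonempty) (hY : Y.Nonempty)
    (haff : affects D X Y Z)
    (hcard : 2 ≤ X.card)
    (hclus : ∀ sX : Finset V, sX ⊂ X → sX.Nonempty → ¬ affects D sX Y Z) :
    ∀ sX : Finset V, sX ⊆ X → sX.Nonempty → sX ≠ X →
      affects D sX Y ((X \ sX) ∪ Z) := by
  intro sX hsub hne hneq
  by_contra hna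
  obtain ⟨xv, zv, hx⟩ := haff
  apply hx
  -- restriction of xv to sX and to X \ sX
  set sv : ∀ i : sX, α i := fun i => xv ⟨i, hsub i.2⟩ with hsv
  set wv : ∀ i : (X \ sX : Finset V), α i :=
    fun i => xv ⟨i, (Finset.mem_sdiff.mp i.2).1⟩ with hwv
  have hE : sX ∪ ((X \ sX) ∪ Z) = X ∪ Z := by
    rw [← Finset.union_assoc, Finset.union_sdiff_of_subset hsub]
  have hdiffne : (X \ sX).Nonempty := by
    rw [Finset.sdiff_nonempty]
    intro h
    exact hneq (Finset.Subset.antisymm hsub h)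
  have hdiffss : X \ sX ⊂ X := by
    refine Finset.ssubset_iff_of_subset (Finset.sdiff_subset) |>.mpr ?_
    obtain ⟨a, ha⟩ := hne
    exact ⟨a, hsub ha, by simp [ha]⟩
  have h1 : ∀ (sv' : ∀ i : sX, α i) (wv' : ∀ i : ((X \ sX) ∪ Z : Finset V), α i),
      PMF.map (restrictTo Y) (D (sX ∪ ((X \ sX) ∪ Z)) (combine sv' wv')) =
        PMF.map (restrictTo Y) (D ((X \ sX) ∪ Z) wv') := by
    intro sv' wv'
    by_contra h
    exact hna ⟨sv', wv', h⟩
  have h2 : ∀ (wv' : ∀ i : (X \ sX : Finset V), α i) (zv' : ∀ i : Z, α i),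
      PMF.map (restrictTo Y) (D ((X \ sX) ∪ Z) (combine wv' zv')) =
        PMF.map (restrictTo Y) (D Z zv') := by
    intro wv' zv'
    by_contra h
    exact hclus (X \ sX) hdiffss hdiffne ⟨wv', zv', h⟩
  have key : D (X ∪ Z) (combine xv zv) =
      D (sX ∪ ((X \ sX) ∪ Z)) (combine sv (combine wv zv)) := by
    apply D_congr D hE.symm
    intro i hi hj
    by_cases hiS : i ∈ sX
    · simp [combine, hsv, hiS, hsub hiS]
    · have hiXZ : i ∈ X ∨ i ∈ Z := Finset.mem_union.mp hi
      by_cases hiX : i ∈ X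
      · have : i ∈ X \ sX := Finset.mem_sdiff.mpr ⟨hiX, hiS⟩
        simp [combine, hwv, hiX, hiS, this]
      · have hiZ : i ∈ Z := hiXZ.resolve_left hiX
        have : i ∉ (X \ sX : Finset V) := by simp [hiX]
        simp [combine, hiX, hiS, this]
  rw [key, h1 sv (combine wv zv), h2 wv zv]
end

section
/- Let D be an intervention family on V such that no induced affects relation is Clus₁. Then for all pairwise disjoint finite X, Y, Z ⊆ V with X, Y nonempty: if X ⊨ Y|do(Z) holds, then there exists e ∈ X such that {e} ⊨ Y|do(Z) holds. -/
/-- `X ⊨ Y|do(Z)` is Clus₁ if it holds, `|X| ≥ 2`, and no nonempty `s_X ⊊ X`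
satisfies `s_X ⊨ Y|do(Z)`. -/
def Clus1 {V : Type} [DecidableEq V] {α : V → Type}
    (D : InterventionFamily V α) (X Y Z : Finset V) : Prop :=
  affects D X Y Z ∧ 2 ≤ X.card ∧
    ∀ sX : Finset V, sX ⊂ X → sX.Nonempty → ¬ affects D sX Y Z

/-- If no induced affects relation of `D` is Clus₁, then any holding affects
relation `X ⊨ Y|do(Z)` can be reduced to a single variable: there is `e ∈ X` with
`{e} ⊨ Y|do(Z)`. -/
theorem no_clus1_singleton_affects {V : Type} [Fintype V] [DecidableEq V] {α : V → Type}
    [∀ i, Fintype (α i)] [∀ i, Nonempty (α i)]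
    (D : InterventionFamily V α)
    (hnoclus : ∀ X Y Z : Finset V, Disjoint X Y → Disjoint X Z → Disjoint Y Z →
      X.Nonempty → Y.Nonempty → ¬ Clus1 D X Y Z) :
    ∀ X Y Z : Finset V, Disjoint X Y → Disjoint X Z → Disjoint Y Z →
      X.Nonempty → Y.Nonempty → affects D X Y Z →
      ∃ e ∈ X, affects D {e} Y Z := by
  intro X
  induction X using Finset.strongInduction with
  | _ X ih =>
    intro Y Z hXY hXZ hYZ hX hY haff
    rcases Nat.lt_or_ge X.card 2 with h2 | h2
    · obtain ⟨e, he⟩ := Finset.card_eq_one.mp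
        (le_antisymm (Nat.lt_succ_iff.mp h2) (Finset.card_pos.mpr hX))
      subst he
      exact ⟨e, Finset.mem_singleton_self e, haff⟩
    · have hnc := hnoclus X Y Z hXY hXZ hYZ hX hY
      simp only [Clus1, not_and] at hnc
      push_neg at hnc
      obtain ⟨sX, hsub, hne, hsaff⟩ := hnc haff h2
      obtain ⟨e, heM, heaff⟩ := ih sX hsub Y Z
        (hXY.mono_left hsub.subset) (hXZ.mono_left hsub.subset) hYZ hne hY hsaff
      exact ⟨e, hsub.subset heM, heaff⟩
end

section
/- Let D be an intervention family on V such that no induced affects relation is Clus₃. Then for all pairwise disjoint finite X, Y, Z ⊆ V with X, Y nonempty: if X ⊨ Y|do(Z) holds, then there exists e ∈ X such that {e} ⊨ Y holds (i.e., {e} ⊨ Y|do(∅)). -/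
lemma D_cast {V : Type} [DecidableEq V] {α : V → Type}
    (D : InterventionFamily V α) {A B : Finset V} (h : A = B)
    (vA : ∀ i : A, α i) (vB : ∀ i : B, α i)
    (hv : ∀ (i : V) (hA : i ∈ A) (hB : i ∈ B), vA ⟨i, hA⟩ = vB ⟨i, hB⟩) :
    D A vA = D B vB := by
  subst h
  congr 1
  funext i
  exact hv i i.2 i.2

lemma reduceZ {V : Type} [Fintype V] [DecidableEq V] {α : V → Type}
    [∀ i, Fintype (α i)] [∀ i, Nonempty (α i)]
    (D : InterventionFamily V α)
    (hnoclus : ∀ X Y Z : Finset V, Disjoint X Y → Disjoint X Z → Disjoint Y Z →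
      X.Nonempty → Y.Nonempty → ¬ Clus3 D X Y Z) :
    ∀ (n : ℕ) (X Y Z : Finset V), Z.card ≤ n → Disjoint X Y → Disjoint X Z →
      Disjoint Y Z → X.Nonempty → Y.Nonempty → affects D X Y Z → affects D X Y ∅ := by
  intro n
  induction n with
  | zero =>
    intro X Y Z hc _ _ _ _ _ hA
    have hZ : Z = ∅ := Finset.card_eq_zero.mp (Nat.le_zero.mp hc)
    subst hZ; exact hA
  | succ n ih =>
    intro X Y Z hc hXY hXZ hYZ hX hY hA
    rcases Finset.eq_empty_or_nonempty Z with rfl | hZ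
    · exact hA
    · have hnc := hnoclus X Y Z hXY hXZ hYZ hX hY
      rw [Clus3] at hnc
      push_neg at hnc
      obtain ⟨sZ, hsub, hsA⟩ := hnc hA hZ
      exact ih X Y sZ (by have := Finset.card_lt_card hsub; omega)
        hXY (hXZ.mono_right hsub.subset) (hYZ.mono_right hsub.subset) hX hY hsA

lemma emptyZ_singleton {V : Type} [Fintype V] [DecidableEq V] {α : V → Type}
    [∀ i, Fintype (α i)] [∀ i, Nonempty (α i)]
    (D : InterventionFamily V α)
    (hnoclus : ∀ X Y Z : Finset V, Disjoint X Y → Disjoint X Z → Disjoint Y Z →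
      X.Nonempty → Y.Nonempty → ¬ Clus3 D X Y Z) :
    ∀ (n : ℕ) (X Y : Finset V), X.card ≤ n → Disjoint X Y → X.Nonempty → Y.Nonempty →
      affects D X Y ∅ → ∃ e ∈ X, affects D {e} Y ∅ := by
  intro n
  induction n with
  | zero =>
    intro X Y hc _ hX _ _
    exact absurd (Finset.card_eq_zero.mp (Nat.le_zero.mp hc))
      (Finset.nonempty_iff_ne_empty.mp hX)
  | succ n ih =>
    intro X Y hc hXY hX hY hA
    obtain ⟨e, he⟩ := hX
    obtain ⟨X', heX', rfl⟩ : ∃ X', e ∉ X' ∧ X = {e} ∪ X' :=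
      ⟨X.erase e, Finset.notMem_erase e X,
        by rw [← Finset.insert_eq, Finset.insert_erase he]⟩
    obtain ⟨xv, zv, hne⟩ := hA
    have hMain : D (({e} ∪ X') ∪ ∅) (combine xv zv)
        = D ({e} ∪ X')
            (combine (fun i : ({e} : Finset V) => xv ⟨i.1, Finset.mem_union_left _ i.2⟩)
              (fun i : (X' : Finset V) => xv ⟨i.1, Finset.mem_union_right _ i.2⟩)) := by
      apply D_cast D (Finset.union_empty _)
      intro i hiA hiB
      show combine xv zv ⟨i, hiA⟩ = _
      unfold combine
      rw [dif_pos hiB]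
      by_cases hie : i ∈ ({e} : Finset V)
      · rw [dif_pos hie]
      · rw [dif_neg hie]
    rw [hMain] at hne
    by_cases hcase :
        PMF.map (restrictTo Y)
          (D ({e} ∪ X')
            (combine (fun i : ({e} : Finset V) => xv ⟨i.1, Finset.mem_union_left _ i.2⟩)
              (fun i : (X' : Finset V) => xv ⟨i.1, Finset.mem_union_right _ i.2⟩)))
        = PMF.map (restrictTo Y)
            (D X' (fun i : (X' : Finset V) => xv ⟨i.1, Finset.mem_union_right _ i.2⟩))
    · rw [hcase] at hne
      rcases Finset.eq_empty_or_nonempty X' with rfl | hX'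
      · exfalso
        apply hne
        congr 1
        apply D_cast D rfl
        intro i hiA _
        exact absurd hiA (Finset.notMem_empty i)
      · have hX'0 : D (X' ∪ ∅)
            (combine (fun i : (X' : Finset V) => xv ⟨i.1, Finset.mem_union_right _ i.2⟩) zv)
            = D X' (fun i : (X' : Finset V) => xv ⟨i.1, Finset.mem_union_right _ i.2⟩) := by
          apply D_cast D (Finset.union_empty _)
          intro i hiA hiB
          show combine _ zv ⟨i, hiA⟩ = _
          unfold combine
          rw [dif_pos hiB]
        have hAX' : affects D X' Y ∅ :=
          ⟨fun i : (X' : Finset V) => xv ⟨i.1, Finset.mem_union_right _ i.2⟩, zv,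
            by rw [hX'0]; exact hne⟩
        have hcard : X'.card ≤ n := by
          have : ({e} ∪ X').card = X'.card + 1 := by
            rw [← Finset.insert_eq, Finset.card_insert_of_notMem heX']
          omega
        obtain ⟨e', he', hres⟩ := ih X' Y hcard
          (hXY.mono_left Finset.subset_union_right) hX' hY hAX'
        exact ⟨e', Finset.mem_union_right _ he', hres⟩
    · have hAff : affects D {e} Y X' :=
        ⟨fun i : ({e} : Finset V) => xv ⟨i.1, Finset.mem_union_left _ i.2⟩,
          fun i : (X' : Finset V) => xv ⟨i.1, Finset.mem_union_right _ i.2⟩, hcase⟩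
      have hres : affects D {e} Y ∅ :=
        reduceZ D hnoclus X'.card {e} Y X' le_rfl
          (hXY.mono_left Finset.subset_union_left)
          (Finset.disjoint_singleton_left.mpr heX')
          (hXY.symm.mono_right Finset.subset_union_right)
          ⟨e, Finset.mem_singleton_self e⟩ hY hAff
      exact ⟨e, Finset.mem_union_left _ (Finset.mem_singleton_self e), hres⟩

/-- If no induced affects relation of `D` is Clus₃, then any holding affects
relation `X ⊨ Y|do(Z)` yields `e ∈ X` with `{e} ⊨ Y` (i.e. `{e} ⊨ Y|do(∅)`). -/
theorem no_clus3_singleton_affects {V : Type} [Fintype V] [DecidableEq V] {α : V → Type}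
    [∀ i, Fintype (α i)] [∀ i, Nonempty (α i)]
    (D : InterventionFamily V α)
    (hnoclus : ∀ X Y Z : Finset V, Disjoint X Y → Disjoint X Z → Disjoint Y Z →
      X.Nonempty → Y.Nonempty → ¬ Clus3 D X Y Z) :
    ∀ X Y Z : Finset V, Disjoint X Y → Disjoint X Z → Disjoint Y Z →
      X.Nonempty → Y.Nonempty → affects D X Y Z →
      ∃ e ∈ X, affects D {e} Y ∅ := by
  intro X Y Z hXY hXZ hYZ hX hY hA
  have h0 := reduceZ D hnoclus Z.card X Y Z le_rfl hXY hXZ hYZ hX hY hA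
  exact emptyZ_singleton D hnoclus X.card X Y le_rfl hXY hX hY h0
end
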